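/- Let a₋, a₊ > 0 and set δ = 2(a₊ − a₋)/(a₊ + a₋). For δ₃ ∈ ℝ, let (ε₁, ε₃) be the unique pair of reals satisfying ε₃ − ε₁ = δ₃ and a₋·h(ε₁) + a₊·h(ε₃) = a₋·h(δ₃). Then |ε₃ − δ₃| = |ε₁| ≤ |δ₃|·|δ|/2. -/

import Mathlib

set_option maxHeartbeats 1000000

/-- The function `h` from the paper: `h ε = ε` if `ε ≥ 0`, `h ε = sinh ε` otherwise. -/
noncomputable def hFun (ε : ℝ) : ℝ := if 0 ≤ ε then ε else Real.sinh ε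

lemma hFun_of_nonneg {x : ℝ} (hx : 0 ≤ x) : hFun x = x := if_pos hx

lemma hFun_of_nonpos {x : ℝ} (hx : x ≤ 0) : hFun x = Real.sinh x := by
  unfold hFun
  split_ifs with h
  · have hx0 : x = 0 := le_antisymm hx h
    simp [hx0]
  · rfl

lemma hFun_strictMono : StrictMono hFun := by
  intro x y hxy
  unfold hFun
  split_ifs with hx hy hy
  · exact hxy
  · exact absurd (le_trans hx hxy.le) hy
  · calc Real.sinh x < Real.sinh 0 := Real.sinh_lt_sinh.mpr (lt_of_not_ge hx)
      _ = 0 := Real.sinh_zero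
      _ ≤ y := hy
  · exact Real.sinh_lt_sinh.mpr hxy

lemma cosh_combo {a b x y : ℝ} (ha : 0 ≤ a) (hb : 0 ≤ b) (hab : a + b = 1) :
    Real.cosh (a * x + b * y) ≤ a * Real.cosh x + b * Real.cosh y := by
  have h1 := convexOn_exp.2 (Set.mem_univ x) (Set.mem_univ y) ha hb hab
  have h2 := convexOn_exp.2 (Set.mem_univ (-x)) (Set.mem_univ (-y)) ha hb hab
  simp only [smul_eq_mul] at h1 h2
  rw [Real.cosh_eq, Real.cosh_eq, Real.cosh_eq]
  have hneg : -(a * x + b * y) = a * (-x) + b * (-y) := by ring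
  rw [hneg]
  linarith

lemma nonneg_of_deriv (f f' : ℝ → ℝ) (h0 : f 0 = 0)
    (hd : ∀ x, HasDerivAt f (f' x) x) (hnn : ∀ x, 0 ≤ x → 0 ≤ f' x)
    {u : ℝ} (hu : 0 ≤ u) : 0 ≤ f u := by
  have mono : MonotoneOn f (Set.Ici (0:ℝ)) := by
    apply monotoneOn_of_deriv_nonneg (convex_Ici 0)
    · exact fun x _ => (hd x).continuousAt.continuousWithinAt
    · exact fun x _ => (hd x).differentiableAt.differentiableWithinAt
    · intro x hx
      rw [(hd x).deriv]
      refine hnn x (le_of_lt ?_)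
      simpa using hx
  have := mono Set.self_mem_Ici (Set.mem_Ici.mpr hu) hu
  simpa [h0] using this

lemma lemmaI {c : ℝ} (hc0 : 0 ≤ c) (hc1 : c ≤ 1) {u : ℝ} (hu : 0 ≤ u) :
    (1 + c) * Real.sinh ((1 - c) * u) ≤ (1 - c) * (c * u) + (1 - c) * Real.sinh u := by
  have key := nonneg_of_deriv
    (f := fun x => (1 - c) * (c * x) + (1 - c) * Real.sinh x
      - (1 + c) * Real.sinh ((1 - c) * x))
    (f' := fun x => (1 - c) * c + (1 - c) * Real.cosh x
      - (1 + c) * (Real.cosh ((1 - c) * x) * (1 - c)))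
    (by simp)
    (fun x => by
      have hs : HasDerivAt (fun x => Real.sinh ((1 - c) * x))
          (Real.cosh ((1 - c) * x) * (1 - c)) x := by
        have := (Real.hasDerivAt_sinh ((1 - c) * x)).comp x
          ((hasDerivAt_id x).const_mul (1 - c))
        simpa [Function.comp_def] using this
      have hlin : HasDerivAt (fun x : ℝ => (1 - c) * (c * x)) ((1 - c) * c) x := by
        simpa using ((hasDerivAt_id x).const_mul c).const_mul (1 - c)
      exact (hlin.add ((Real.hasDerivAt_sinh x).const_mul (1 - c))).sub (hs.const_mul (1 + c)))
    (fun x hx => by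
      have hconv := cosh_combo (a := 1 - c) (b := c) (x := x) (y := 0)
        (by linarith) hc0 (by ring)
      have h1 : Real.cosh ((1 - c) * x) ≤ (1 - c) * Real.cosh x + c := by
        simpa using hconv
      have hC : 1 ≤ Real.cosh x := Real.one_le_cosh x
      show (0:ℝ) ≤ (1 - c) * c + (1 - c) * Real.cosh x
        - (1 + c) * (Real.cosh ((1 - c) * x) * (1 - c))
      nlinarith [mul_le_mul_of_nonneg_left h1
          (mul_nonneg (by linarith : (0:ℝ) ≤ 1 + c) (by linarith : (0:ℝ) ≤ 1 - c)),
        mul_nonneg (mul_nonneg (by linarith : (0:ℝ) ≤ 1 - c) (sq_nonneg c))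
          (by linarith : (0:ℝ) ≤ Real.cosh x - 1)])
    hu
  linarith

lemma lemmaII {c : ℝ} (hc0 : 0 ≤ c) (hc1 : c ≤ 1) {u : ℝ} (hu : 0 ≤ u) :
    (1 + c) * Real.sinh u ≤ (1 + c) * Real.sinh (c * u) + (1 - c) * Real.sinh ((1 + c) * u) := by
  have key := nonneg_of_deriv
    (f := fun x => (1 + c) * Real.sinh (c * x) + (1 - c) * Real.sinh ((1 + c) * x)
      - (1 + c) * Real.sinh x)
    (f' := fun x => (1 + c) * (Real.cosh (c * x) * c)
      + (1 - c) * (Real.cosh ((1 + c) * x) * (1 + c)) - (1 + c) * Real.cosh x)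
    (by simp)
    (fun x => by
      have hs1 : HasDerivAt (fun x => Real.sinh (c * x)) (Real.cosh (c * x) * c) x := by
        have := (Real.hasDerivAt_sinh (c * x)).comp x ((hasDerivAt_id x).const_mul c)
        simpa [Function.comp_def] using this
      have hs2 : HasDerivAt (fun x => Real.sinh ((1 + c) * x))
          (Real.cosh ((1 + c) * x) * (1 + c)) x := by
        have := (Real.hasDerivAt_sinh ((1 + c) * x)).comp x
          ((hasDerivAt_id x).const_mul (1 + c))
        simpa [Function.comp_def] using this
      exact ((hs1.const_mul (1 + c)).add (hs2.const_mul (1 - c))).sub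
        ((Real.hasDerivAt_sinh x).const_mul (1 + c)))
    (fun x hx => by
      have hconv := cosh_combo (a := c) (b := 1 - c) (x := c * x) (y := (1 + c) * x)
        hc0 (by linarith) (by ring)
      have hx' : c * (c * x) + (1 - c) * ((1 + c) * x) = x := by ring
      rw [hx'] at hconv
      show (0:ℝ) ≤ (1 + c) * (Real.cosh (c * x) * c)
        + (1 - c) * (Real.cosh ((1 + c) * x) * (1 + c)) - (1 + c) * Real.cosh x
      nlinarith [hconv])
    hu
  linarith

/-- Interaction estimate for the accurate solver `R_{LL}`: when a 3-wave of strength δ₃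
crosses a phase interface of strength δ, the strength change of the transmitted wave
equals the size of the reflected wave and is bounded by |δ₃|·|δ|/2. -/
theorem statement4 (aminus aplus : ℝ) (haminus : 0 < aminus) (haplus : 0 < aplus)
    (δ δ₃ ε₁ ε₃ : ℝ)
    (hδ : δ = 2 * (aplus - aminus) / (aplus + aminus))
    (h1 : ε₃ - ε₁ = δ₃)
    (h2 : aminus * hFun ε₁ + aplus * hFun ε₃ = aminus * hFun δ₃) :
    |ε₃ - δ₃| = |ε₁| ∧ |ε₁| ≤ |δ₃| * |δ| / 2 := by
  have hsum : 0 < aplus + aminus := by linarith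
  have he31 : ε₃ = δ₃ + ε₁ := by linarith
  obtain ⟨u, hu_def⟩ : ∃ x : ℝ, x = |δ₃| := ⟨_, rfl⟩
  obtain ⟨c, hc_def⟩ : ∃ x : ℝ, x = |aplus - aminus| / (aplus + aminus) := ⟨_, rfl⟩
  obtain ⟨b, hb_def⟩ : ∃ x : ℝ, x = u * c := ⟨_, rfl⟩
  have hc0 : 0 ≤ c := hc_def ▸ div_nonneg (abs_nonneg _) hsum.le
  have habs_lt : |aplus - aminus| < aplus + aminus :=
    abs_lt.mpr ⟨by linarith, by linarith⟩
  have hc1 : c < 1 := hc_def ▸ (div_lt_one hsum).mpr habs_lt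
  have hcs : c * (aplus + aminus) = |aplus - aminus| := by
    rw [hc_def]; field_simp
  have hu0 : 0 ≤ u := hu_def ▸ abs_nonneg _
  have hb0 : 0 ≤ b := hb_def ▸ mul_nonneg hu0 hc0
  have hbu : b ≤ u := by
    rw [hb_def]
    calc u * c ≤ u * 1 := mul_le_mul_of_nonneg_left hc1.le hu0
    _ = u := mul_one u
  have hgoal_eq : |δ₃| * |δ| / 2 = b := by
    rw [hδ, hb_def, hu_def, hc_def, abs_div, abs_mul, abs_two, abs_of_pos hsum]
    ring
  set F : ℝ → ℝ := fun x => aminus * hFun x + aplus * hFun (δ₃ + x) with hF_def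
  have hFmono : StrictMono F := by
    intro x y hxy
    exact add_lt_add
      (mul_lt_mul_of_pos_left (hFun_strictMono hxy) haminus)
      (mul_lt_mul_of_pos_left (hFun_strictMono (by linarith)) haplus)
  have hFe : F ε₁ = aminus * hFun δ₃ := by
    simp only [hF_def]
    rw [← he31]
    exact h2
  have upper : F ε₁ ≤ F b := by
    rw [hFe, hF_def]
    simp only
    rw [hFun_of_nonneg hb0]
    rcases le_or_gt 0 δ₃ with hδ3 | hδ3
    · -- δ₃ ≥ 0
      have hbδ : b = δ₃ * c := by rw [hb_def, hu_def, abs_of_nonneg hδ3]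
      rw [hFun_of_nonneg hδ3, hFun_of_nonneg (by linarith : (0:ℝ) ≤ δ₃ + b)]
      have h1' : aminus - aplus ≤ |aplus - aminus| := by
        rw [abs_sub_comm]; exact le_abs_self _
      rw [hbδ]
      nlinarith [mul_nonneg hδ3
        (by linarith : (0:ℝ) ≤ c * (aplus + aminus) + (aplus - aminus))]
    · -- δ₃ < 0
      have huδ : u = -δ₃ := hu_def ▸ abs_of_neg hδ3
      have hδb : δ₃ + b ≤ 0 := by linarith
      rw [hFun_of_nonpos hδ3.le, hFun_of_nonpos hδb]
      have e1 : Real.sinh δ₃ = -Real.sinh u := by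
        rw [huδ, Real.sinh_neg, neg_neg]
      have e2 : Real.sinh (δ₃ + b) = -Real.sinh (u - b) := by
        rw [show δ₃ + b = -(u - b) by rw [huδ]; ring, Real.sinh_neg]
      rw [e1, e2]
      -- need: aplus * sinh (u - b) ≤ aminus * b + aminus * sinh u
      rcases le_total aplus aminus with hts | hts
      · have hsle : Real.sinh (u - b) ≤ Real.sinh u := Real.sinh_le_sinh.mpr (by linarith)
        have hsnn : 0 ≤ Real.sinh (u - b) := Real.sinh_nonneg_iff.mpr (by linarith)
        nlinarith
      · have hcs' : c * (aplus + aminus) = aplus - aminus := by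
          rw [hcs, abs_of_nonneg (by linarith)]
        have htc : aplus * (1 - c) = aminus * (1 + c) := by linarith [hcs']
        have hI := lemmaI hc0 hc1.le hu0
        have hcu : c * u = b := by rw [hb_def]; ring
        have h1mu : (1 - c) * u = u - b := by rw [hb_def]; ring
        rw [hcu, h1mu] at hI
        have h1mc : (0:ℝ) < 1 - c := by linarith
        have e3 : (1 - c) * (aplus * Real.sinh (u - b))
            = aminus * ((1 + c) * Real.sinh (u - b)) := by
          linear_combination Real.sinh (u - b) * htc
        have key : (1 - c) * (aplus * Real.sinh (u - b))
            ≤ (1 - c) * (aminus * b + aminus * Real.sinh u) := by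
          rw [e3]
          calc aminus * ((1 + c) * Real.sinh (u - b))
              ≤ aminus * ((1 - c) * b + (1 - c) * Real.sinh u) :=
                mul_le_mul_of_nonneg_left hI haminus.le
            _ = (1 - c) * (aminus * b + aminus * Real.sinh u) := by ring
        have key2 := le_of_mul_le_mul_left key h1mc
        linarith
  have lower : F (-b) ≤ F ε₁ := by
    rw [hFe, hF_def]
    simp only
    rw [hFun_of_nonpos (by linarith : -b ≤ 0), Real.sinh_neg]
    rcases le_or_gt 0 δ₃ with hδ3 | hδ3
    · -- δ₃ ≥ 0
      have hbδ : b = δ₃ * c := by rw [hb_def, hu_def, abs_of_nonneg hδ3]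
      have huδ : u = δ₃ := hu_def ▸ abs_of_nonneg hδ3
      rw [hFun_of_nonneg hδ3, hFun_of_nonneg (by linarith : (0:ℝ) ≤ δ₃ + -b)]
      have hsb : b ≤ Real.sinh b := Real.self_le_sinh_iff.mpr hb0
      have h2' : aplus - aminus ≤ |aplus - aminus| := le_abs_self _
      nlinarith [mul_nonneg hδ3
        (by linarith : (0:ℝ) ≤ c * (aplus + aminus) - (aplus - aminus)),
        mul_le_mul_of_nonneg_left hsb haminus.le, hbδ]
    · -- δ₃ < 0
      have huδ : u = -δ₃ := hu_def ▸ abs_of_neg hδ3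
      have hδb : δ₃ + -b ≤ 0 := by linarith
      rw [hFun_of_nonpos hδ3.le, hFun_of_nonpos hδb]
      have e1 : Real.sinh δ₃ = -Real.sinh u := by
        rw [huδ, Real.sinh_neg, neg_neg]
      have e2 : Real.sinh (δ₃ + -b) = -Real.sinh (u + b) := by
        rw [show δ₃ + -b = -(u + b) by rw [huδ]; ring, Real.sinh_neg]
      rw [e1, e2]
      -- need: aminus * sinh u ≤ aminus * sinh b + aplus * sinh (u + b)
      rcases le_total aminus aplus with hts | hts
      · have hsle : Real.sinh u ≤ Real.sinh (u + b) := Real.sinh_le_sinh.mpr (by linarith)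
        have hsnn : 0 ≤ Real.sinh u := Real.sinh_nonneg_iff.mpr hu0
        have hsbnn : 0 ≤ Real.sinh b := Real.sinh_nonneg_iff.mpr hb0
        nlinarith
      · have hcs' : c * (aplus + aminus) = aminus - aplus := by
          rw [hcs, abs_sub_comm, abs_of_nonneg (by linarith)]
        have htc : aplus * (1 + c) = aminus * (1 - c) := by linarith [hcs']
        have hII := lemmaII hc0 hc1.le hu0
        have hcu : c * u = b := by rw [hb_def]; ring
        have h1pu : (1 + c) * u = u + b := by rw [hb_def]; ring
        rw [hcu, h1pu] at hII
        have h1pc : (0:ℝ) < 1 + c := by linarith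
        have key : (1 + c) * (aminus * Real.sinh u)
            ≤ (1 + c) * (aminus * Real.sinh b + aplus * Real.sinh (u + b)) := by
          have h4 := mul_le_mul_of_nonneg_left hII haminus.le
          have e5 : aminus * (1 - c) * Real.sinh (u + b)
              = aplus * (1 + c) * Real.sinh (u + b) := by
            linear_combination Real.sinh (u + b) * htc.symm
          calc (1 + c) * (aminus * Real.sinh u)
              = aminus * ((1 + c) * Real.sinh u) := by ring
            _ ≤ aminus * ((1 + c) * Real.sinh b + (1 - c) * Real.sinh (u + b)) := h4
            _ = (1 + c) * (aminus * Real.sinh b) + aminus * (1 - c) * Real.sinh (u + b) := by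
                ring
            _ = (1 + c) * (aminus * Real.sinh b + aplus * Real.sinh (u + b)) := by
                rw [e5]; ring
        have key2 := le_of_mul_le_mul_left key h1pc
        linarith
  refine ⟨by rw [show ε₃ - δ₃ = ε₁ by linarith], ?_⟩
  rw [hgoal_eq]
  exact abs_le.mpr ⟨by linarith [hFmono.le_iff_le.mp lower],
    hFmono.le_iff_le.mp upper⟩
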